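/- For every 0 ≤ ε ≤ 1/3, the two-qubit Werner state χ = ε |Ψ⁻⟩⟨Ψ⁻| + (1−ε) I/4 is separable, where I is the 4 × 4 identity matrix. -/

import Mathlib

open Matrix Kronecker
open scoped ComplexOrder

/-- A density matrix: positive semidefinite with trace 1. -/
def IsDensityMatrix {m : Type} [Fintype m] [DecidableEq m] (ρ : Matrix m m ℂ) : Prop :=
  ρ.PosSemidef ∧ ρ.trace = 1

/-- The Bell state `|Ψ⁻⟩ = (|01⟩ - |10⟩)/√2` on two qubits,
with `ℂ⁴` realised as functions on `Fin 2 × Fin 2`. -/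
noncomputable def psiMinus : Fin 2 × Fin 2 → ℂ := fun p =>
  if p = (0, 1) then (Real.sqrt 2 : ℂ)⁻¹
  else if p = (1, 0) then -(Real.sqrt 2 : ℂ)⁻¹ else 0

lemma outer_psd (v : Fin 2 → ℂ) : (vecMulVec v (star v)).PosSemidef := by
  rw [vecMulVec_eq Unit, ← conjTranspose_replicateCol]
  exact posSemidef_self_mul_conjTranspose _

lemma outer_dm (v : Fin 2 → ℂ)
    (h : v 0 * (starRingEnd ℂ) (v 0) + v 1 * (starRingEnd ℂ) (v 1) = 1) :
    IsDensityMatrix (vecMulVec v (star v)) := by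
  refine ⟨outer_psd v, ?_⟩
  simp [trace, vecMulVec_apply, Fin.sum_univ_two, h]

/-- the six single-qubit vectors used in the decomposition -/
noncomputable def wv : Fin 6 → (Fin 2 → ℂ)
  | 0 => ![1, 0]
  | 1 => ![0, 1]
  | 2 => ![(Real.sqrt 2 : ℂ)⁻¹, (Real.sqrt 2 : ℂ)⁻¹]
  | 3 => ![(Real.sqrt 2 : ℂ)⁻¹, -(Real.sqrt 2 : ℂ)⁻¹]
  | 4 => ![(Real.sqrt 2 : ℂ)⁻¹, Complex.I * (Real.sqrt 2 : ℂ)⁻¹]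
  | 5 => ![(Real.sqrt 2 : ℂ)⁻¹, -(Complex.I * (Real.sqrt 2 : ℂ)⁻¹)]

lemma hs2 : ((Real.sqrt 2 : ℂ))⁻¹ * ((Real.sqrt 2 : ℂ))⁻¹ = 1 / 2 := by
  rw [← mul_inv]
  norm_cast
  rw [Real.mul_self_sqrt (by norm_num)]
  norm_num

lemma wv_dm (j : Fin 6) : IsDensityMatrix (vecMulVec (wv j) (star (wv j))) := by
  apply outer_dm
  fin_cases j <;>
    simp [wv, Complex.mul_conj', map_inv₀, Complex.conj_ofReal, hs2] <;> ring_nf <;>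
    norm_num [Complex.I_sq, sq, hs2, ← Complex.ofReal_pow, Real.sq_sqrt]

noncomputable def aIdx : Fin 10 → Fin 6 := ![2, 3, 4, 5, 0, 1, 0, 0, 1, 1]
noncomputable def bIdx : Fin 10 → Fin 6 := ![3, 2, 5, 4, 1, 0, 0, 1, 0, 1]

lemma hs4 : Real.sqrt 2 ^ 4 = 4 := by
  rw [show 4 = 2 * 2 from rfl, pow_mul, Real.sq_sqrt (by norm_num)]; norm_num

set_option maxHeartbeats 2000000 in
/-- For every `0 ≤ ε ≤ 1/3`, the two-qubit Werner state
`χ = ε |Ψ⁻⟩⟨Ψ⁻| + (1-ε) I/4` is separable: it is a finite convex combination of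
Kronecker products of single-qubit density matrices. -/
theorem werner_state_separable (ε : ℝ) (hε0 : 0 ≤ ε) (hε : ε ≤ 1 / 3) :
    ∃ (k : ℕ) (p : Fin k → ℝ) (A B : Fin k → Matrix (Fin 2) (Fin 2) ℂ),
      (∀ j, 0 ≤ p j) ∧ (∑ j, p j = 1) ∧
      (∀ j, IsDensityMatrix (A j) ∧ IsDensityMatrix (B j)) ∧
      (ε : ℂ) • vecMulVec psiMinus (star psiMinus) + (((1 - ε) / 4 : ℝ) : ℂ) • 1 =
        ∑ j, (p j : ℂ) • (A j ⊗ₖ B j) := by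
  refine ⟨10, fun j => if j.val < 6 then ε / 2 else (1 - 3 * ε) / 4,
      fun j => vecMulVec (wv (aIdx j)) (star (wv (aIdx j))),
      fun j => vecMulVec (wv (bIdx j)) (star (wv (bIdx j))), ?_, ?_, ?_, ?_⟩
  · intro j; dsimp only; split <;> linarith
  · simp [Fin.sum_univ_succ]; ring
  · intro j; exact ⟨wv_dm _, wv_dm _⟩
  · ext ⟨a, b⟩ ⟨c, d⟩
    simp only [Matrix.sum_apply, Fin.sum_univ_succ, Fin.sum_univ_zero]
    fin_cases a <;> fin_cases b <;> fin_cases c <;> fin_cases d <;>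
      simp [psiMinus, vecMulVec_apply, kroneckerMap_apply,
        aIdx, bIdx, wv, Matrix.one_apply, Pi.star_apply, map_inv₀,
        Complex.conj_ofReal, Prod.ext_iff, hs2, -cons_vecMulVec, -vecMulVec_cons] <;>
      ring_nf <;>
      norm_num [Complex.I_sq, sq, hs2, hs4, ← Complex.ofReal_pow, Real.sq_sqrt] <;>
      ring_nf
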